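/- Let Q be a finite acyclic quiver, V a finite-dimensional representation of Q, and for each non-lazy path \omega of Q define \overline{V}_\omega = \bigoplus_{\alpha \in \omega} \{ x + V_\alpha(x) : x \in V_{s(\alpha)} \} \subseteq \bigoplus_{p \in \omega} V_p (sum over the arrows appearing in \omega), and \overline{V}_\omega = 0 for lazy paths. Then for each non-lazy path \omega the sum \bigoplus_{\alpha \in \omega} \{ x + V_\alpha(x) \} is direct, and dim \overline{V}_\omega = \sum_{p \in \omega, p \ne t(\omega)} dim V_p; moreover the spaces \overline{V}_\omega form a subrepresentation of M(V_*) over \overline{Q}/I (i.e., they are compatible with the inclusion maps). -/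

import Mathlib

/- STATEMENT 19: Let Q be a finite acyclic quiver, V a finite-dimensional representation of
Q, and for each path ω of Q define V̄_ω = ⊕_{α ∈ ω} { x + V_α(x) : x ∈ V_{s(α)} } inside
⊕_{p ∈ ω} V_p (and V̄_ω = 0 for lazy paths).  Then the sum of the graphs is direct,
dim V̄_ω = Σ_{p ∈ ω, p ≠ t(ω)} dim V_p, and the spaces V̄_ω are compatible with the
inclusion maps induced by extending the path on either side, i.e. they form a
subrepresentation of M(V_*) over Q̄/I.

The ambient space is ⊕_p V_p (as a Π-type over the finite vertex set), in which the graph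
of V_α is the range of x ↦ (single_{s α} x + single_{t α} (V_α x)). -/

open Quiver

set_option synthInstance.maxHeartbeats 400000
set_option maxHeartbeats 1000000
set_option linter.unusedSectionVars false

/-- The set of arrows of `Q`. -/
abbrev Arr (Q : Type) [Quiver.{0} Q] : Type := Σ i j : Q, i ⟶ j

section

variable (k : Type) [Field k] (Q : Type) [Quiver.{0} Q] [DecidableEq Q]
  (V : Q → Type) [∀ p, AddCommGroup (V p)] [∀ p, Module k (V p)]
  (Vf : ∀ {i j : Q}, (i ⟶ j) → (V i →ₗ[k] V j))

/-- The list of arrows appearing in a path. -/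
def arrowsOf : ∀ {i j : Q}, Path i j → List (Arr Q)
  | _, _, Path.nil => []
  | _, _, @Path.cons _ _ _ b c p e => (⟨b, c, e⟩ : Arr Q) :: arrowsOf p

/-- The list of vertices through which a path passes. -/
def vertsOf : ∀ {i j : Q}, Path i j → List Q
  | i, _, Path.nil => [i]
  | _, _, @Path.cons _ _ _ _ c p _ => c :: vertsOf p

/-- The graph of `V_α` inside `⊕_p V_p`: the range of
`x ↦ single_{s α} x + single_{t α} (V_α x)`. -/
noncomputable def graphMap (ar : Arr Q) : V ar.1 →ₗ[k] (∀ p : Q, V p) :=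
  LinearMap.single k V ar.1 + (LinearMap.single k V ar.2.1).comp (Vf ar.2.2)

/-- `V̄_ω = ⊕_{α ∈ ω} { x + V_α(x) }` (which is `0` for lazy paths). -/
noncomputable def Vbar {i j : Q} (ω : Path i j) : Submodule k (∀ p : Q, V p) :=
  ⨆ ar ∈ arrowsOf Q ω, LinearMap.range (graphMap k Q V @Vf ar)

lemma graphMap_apply (ar : Arr Q) (z : V ar.1) :
    graphMap k Q V @Vf ar z = Pi.single ar.1 z + Pi.single ar.2.1 (Vf ar.2.2 z) := rfl

lemma arrowsOf_comp {a b c : Q} (p : Path a b) (q : Path b c) :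
    arrowsOf Q (p.comp q) = arrowsOf Q q ++ arrowsOf Q p := by
  induction q with
  | nil => simp [Path.comp_nil, arrowsOf]
  | cons q e ih => simp [Path.comp_cons, arrowsOf, ih]

lemma target_mem_vertsOf {a b : Q} (p : Path a b) : b ∈ vertsOf Q p := by
  cases p <;> simp [vertsOf]

lemma exists_path_of_mem_vertsOf {a b : Q} (p : Path a b) {v : Q}
    (h : v ∈ vertsOf Q p) : Nonempty (Path v b) := by
  induction p with
  | nil =>
    simp [vertsOf] at h
    exact ⟨h ▸ Path.nil⟩
  | cons p e ih =>
    simp only [vertsOf, List.mem_cons] at h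
    rcases h with h' | h'
    · exact ⟨h' ▸ Path.nil⟩
    · obtain ⟨q⟩ := ih h'
      exact ⟨q.cons e⟩

lemma vertsOf_nodup (hacyclic : ∀ (a : Q) (p : Path a a), p = Path.nil)
    {a b : Q} (p : Path a b) : (vertsOf Q p).Nodup := by
  induction p with
  | nil => simp [vertsOf]
  | cons p e ih =>
    simp only [vertsOf]
    refine List.nodup_cons.mpr ⟨fun hc => ?_, ih⟩
    obtain ⟨q⟩ := exists_path_of_mem_vertsOf Q p hc
    simpa using congrArg Path.length (hacyclic _ (q.cons e))

lemma vertsOf_eq {a b : Q} (p : Path a b) :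
    vertsOf Q p = b :: (arrowsOf Q p).map (fun ar => ar.1) := by
  induction p with
  | nil => simp [vertsOf, arrowsOf]
  | cons p e ih => simp [vertsOf, arrowsOf, ih]

lemma sum_graph_apply_eq_zero {a b : Q} (p : Path a b) (x : ∀ ar : Arr Q, V ar.1)
    {v : Q} (hv : v ∉ vertsOf Q p) :
    ((arrowsOf Q p).map fun ar => graphMap k Q V @Vf ar (x ar)).sum v = 0 := by
  induction p with
  | nil => simp [arrowsOf]
  | @cons b' c' p e ih =>
    simp only [vertsOf, List.mem_cons, not_or] at hv
    obtain ⟨hvc, hvp⟩ := hv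
    have hvb : v ≠ b' := fun h => hvp (h ▸ target_mem_vertsOf Q p)
    simp only [arrowsOf, List.map_cons, List.sum_cons, Pi.add_apply, ih hvp, add_zero]
    rw [graphMap_apply]
    simp [Pi.single_eq_of_ne hvb, Pi.single_eq_of_ne hvc]

lemma key_zero (hacyclic : ∀ (a : Q) (p : Path a a), p = Path.nil)
    {a : Q} : ∀ {b : Q} (p : Path a b) (x : ∀ ar : Arr Q, V ar.1) (y : V b),
    ((arrowsOf Q p).map fun ar => graphMap k Q V @Vf ar (x ar)).sum = Pi.single b y →
    (∀ ar ∈ arrowsOf Q p, x ar = 0) ∧ y = 0 := by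
  intro b p
  induction p with
  | nil =>
    intro x y h
    have hy : y = 0 := by
      have := congrFun h a
      simpa [arrowsOf] using this.symm
    exact ⟨by simp [arrowsOf], hy⟩
  | @cons b' c' p e ih =>
    intro x y h
    have hnd := vertsOf_nodup Q hacyclic (p.cons e)
    simp only [vertsOf, List.nodup_cons] at hnd
    have hc : c' ∉ vertsOf Q p := hnd.1
    have hb : b' ∈ vertsOf Q p := target_mem_vertsOf Q p
    have hbc : b' ≠ c' := fun hh => hc (hh ▸ hb)
    have hsplit : graphMap k Q V @Vf (⟨b', c', e⟩ : Arr Q) (x ⟨b', c', e⟩) +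
        ((arrowsOf Q p).map fun ar => graphMap k Q V @Vf ar (x ar)).sum = Pi.single c' y := by
      simpa [arrowsOf, List.map_cons, List.sum_cons] using h
    have hy : y = Vf e (x ⟨b', c', e⟩) := by
      have h2 := congrFun hsplit c'
      rw [graphMap_apply] at h2
      rw [Pi.add_apply, Pi.add_apply, Pi.single_eq_of_ne (Ne.symm hbc), Pi.single_eq_same,
        sum_graph_apply_eq_zero k Q V @Vf p x hc, Pi.single_eq_same, zero_add, add_zero] at h2
      exact h2.symm
    have hSeq : ((arrowsOf Q p).map fun ar => graphMap k Q V @Vf ar (x ar)).sum =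
        Pi.single b' (-(x ⟨b', c', e⟩)) := by
      funext v
      by_cases hv : v = c'
      · subst hv
        rw [sum_graph_apply_eq_zero k Q V @Vf p x hc, Pi.single_eq_of_ne (Ne.symm hbc)]
      · have h2 := congrFun hsplit v
        rw [graphMap_apply] at h2
        rw [Pi.add_apply, Pi.add_apply, Pi.single_eq_of_ne hv, Pi.single_eq_of_ne hv,
          add_zero] at h2
        by_cases hvb : v = b'
        · subst hvb
          rw [Pi.single_eq_same] at h2 ⊢
          exact eq_neg_of_add_eq_zero_right h2
        · rw [Pi.single_eq_of_ne hvb] at h2 ⊢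
          simpa using h2
    obtain ⟨htail, hx0z⟩ := ih x (-(x ⟨b', c', e⟩)) hSeq
    have hx00 : x (⟨b', c', e⟩ : Arr Q) = 0 := by
      have := neg_eq_zero.mp hx0z
      exact this
    refine ⟨?_, by simp [hy, hx00]⟩
    intro ar har
    simp only [arrowsOf, List.mem_cons] at har
    rcases har with rfl | har
    · exact hx00
    · exact htail ar har
/-- The sum defining `V̄_ω` is direct,
`dim V̄_ω = Σ_{p ∈ ω, p ≠ t(ω)} dim V_p`, and the subspaces `V̄_ω` are compatible with the
structure maps of `M(V_*)` given by extending the path at either end (so that they form a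
subrepresentation of `M(V_*)` over `Q̄/I`). -/
theorem Vbar_direct_dim_subrep
    [Fintype Q] [∀ a b : Q, Fintype (a ⟶ b)] [∀ p, FiniteDimensional k (V p)]
    (hacyclic : ∀ (a : Q) (p : Path a a), p = Path.nil)
    {i j : Q} (ω : Path i j) :
    iSupIndep
      (fun ar : {ar : Arr Q // ar ∈ arrowsOf Q ω} =>
        LinearMap.range (graphMap k Q V @Vf ar.1)) ∧
    Module.finrank k ↥(Vbar k Q V @Vf ω) =
      ∑ p ∈ (vertsOf Q ω).toFinset.erase j, Module.finrank k (V p) ∧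
    (∀ {c : Q} (β : j ⟶ c), Vbar k Q V @Vf ω ≤ Vbar k Q V @Vf (ω.cons β)) ∧
    (∀ {c : Q} (α : c ⟶ i), Vbar k Q V @Vf ω ≤ Vbar k Q V @Vf ((α.toPath).comp ω)) := by
  classical
  have hvnd : (vertsOf Q ω).Nodup := vertsOf_nodup Q hacyclic ω
  have hveq : vertsOf Q ω = j :: (arrowsOf Q ω).map (fun ar => ar.1) := vertsOf_eq Q ω
  have hsrcnd : ((arrowsOf Q ω).map (fun ar => ar.1)).Nodup := by
    rw [hveq] at hvnd; exact (List.nodup_cons.mp hvnd).2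
  have hjns : j ∉ (arrowsOf Q ω).map (fun ar => ar.1) := by
    rw [hveq] at hvnd; exact (List.nodup_cons.mp hvnd).1
  have hand : (arrowsOf Q ω).Nodup := hsrcnd.of_map
  -- the finite index type
  set ι := {ar : Arr Q // ar ∈ arrowsOf Q ω} with hι
  -- fintype-sum version of the key lemma
  have keyzero : ∀ w : (∀ jj : ι, V jj.1.1),
      (∑ jj : ι, graphMap k Q V @Vf jj.1 (w jj)) = 0 → ∀ jj : ι, w jj = 0 := by
    intro w hw jj
    set x : ∀ ar : Arr Q, V ar.1 :=
      fun ar => if h : ar ∈ arrowsOf Q ω then w ⟨ar, h⟩ else 0 with hx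
    have hconv : (∑ jj : ι, graphMap k Q V @Vf jj.1 (w jj)) =
        ((arrowsOf Q ω).map fun ar => graphMap k Q V @Vf ar (x ar)).sum := by
      rw [← List.sum_toFinset _ hand,
        Finset.sum_subtype (arrowsOf Q ω).toFinset (fun ar => List.mem_toFinset)
          (fun ar => graphMap k Q V @Vf ar (x ar))]
      refine Finset.sum_congr rfl fun jj _ => ?_
      have : x jj.1 = w jj := by rw [hx]; exact dif_pos jj.2
      rw [this]
    have hk := key_zero k Q V @Vf hacyclic ω x 0
      (by rw [← hconv, hw, Pi.single_zero])
    have := hk.1 jj.1 jj.2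
    rw [hx] at this
    simp only [dif_pos jj.2] at this
    exact this
  refine ⟨?_, ?_, ?_, ?_⟩
  · -- independence
    rw [iSupIndep_def]
    intro i0
    rw [Submodule.disjoint_def]
    intro v hv1 hv2
    obtain ⟨xi, hxi⟩ := hv1
    rw [Submodule.mem_iSup_iff_exists_finsupp] at hv2
    obtain ⟨f, hf, hsum⟩ := hv2
    have hz : ∀ jj : ι, ∃ z : V jj.1.1, graphMap k Q V @Vf jj.1 z = f jj := by
      intro jj
      by_cases h : jj = i0
      · refine ⟨0, ?_⟩
        have hfz := hf jj
        rw [h, iSup_neg (not_not_intro rfl)] at hfz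
        rw [Submodule.mem_bot] at hfz
        rw [h, hfz, map_zero]
      · have hfz := hf jj
        rw [iSup_pos h] at hfz
        exact hfz
    choose z hzz using hz
    have hfi0 : f i0 = 0 := by
      have hfz := hf i0
      rw [iSup_neg (not_not_intro rfl), Submodule.mem_bot] at hfz
      exact hfz
    have hvsum : (∑ jj : ι, f jj) = v := by
      rw [← hsum]
      exact (Finsupp.sum_fintype f (fun _ m => m) (fun _ => rfl)).symm
    set w : ∀ jj : ι, V jj.1.1 := Function.update z i0 (-xi) with hw
    have htotal : (∑ jj : ι, graphMap k Q V @Vf jj.1 (w jj)) = 0 := by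
      rw [← Finset.add_sum_erase _ _ (Finset.mem_univ i0)]
      have h1 : graphMap k Q V @Vf i0.1 (w i0) = -v := by
        rw [hw, Function.update_self, map_neg, hxi]
      have h2 : (∑ jj ∈ Finset.univ.erase i0, graphMap k Q V @Vf jj.1 (w jj)) = v := by
        have : ∀ jj ∈ Finset.univ.erase i0,
            graphMap k Q V @Vf jj.1 (w jj) = f jj := by
          intro jj hjj
          rw [hw, Function.update_of_ne (Finset.ne_of_mem_erase hjj), hzz]
        rw [Finset.sum_congr rfl this, Finset.sum_erase_eq_sub (Finset.mem_univ i0),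
          hfi0, sub_zero, hvsum]
      rw [h1, h2, neg_add_cancel]
    have := keyzero w htotal i0
    rw [hw, Function.update_self, neg_eq_zero] at this
    rw [← hxi, this, map_zero]
  · -- dimension
    set Φ : (∀ jj : ι, V jj.1.1) →ₗ[k] (∀ p : Q, V p) :=
      ∑ jj : ι, (graphMap k Q V @Vf jj.1).comp (LinearMap.proj jj) with hΦ
    have hΦapply : ∀ w, Φ w = ∑ jj : ι, graphMap k Q V @Vf jj.1 (w jj) := by
      intro w
      rw [hΦ, LinearMap.sum_apply]
      exact Finset.sum_congr rfl fun jj _ => rfl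
    have hinj : Function.Injective Φ := by
      rw [← LinearMap.ker_eq_bot]
      apply LinearMap.ker_eq_bot'.mpr
      intro w hwz
      funext jj
      exact keyzero w (by rw [← hΦapply]; exact hwz) jj
    have hrange : LinearMap.range Φ = Vbar k Q V @Vf ω := by
      apply le_antisymm
      · rintro _ ⟨w, rfl⟩
        rw [hΦapply]
        apply Submodule.sum_mem
        intro jj _
        apply Submodule.mem_iSup_of_mem jj.1
        apply Submodule.mem_iSup_of_mem jj.2
        exact ⟨w jj, rfl⟩
      · refine iSup₂_le fun ar har => ?_
        rintro _ ⟨zz, rfl⟩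
        refine ⟨Pi.single (⟨ar, har⟩ : ι) zz, ?_⟩
        rw [hΦapply, Finset.sum_eq_single (⟨ar, har⟩ : ι)]
        · rw [Pi.single_eq_same]
        · intro b _ hb
          rw [Pi.single_eq_of_ne hb, map_zero]
        · intro h; exact absurd (Finset.mem_univ _) h
    have hdim : Module.finrank k ↥(Vbar k Q V @Vf ω) =
        ∑ jj : ι, Module.finrank k (V jj.1.1) := by
      rw [← hrange, LinearMap.finrank_range_of_inj hinj, Module.finrank_pi_fintype k]
    rw [hdim]
    have himg : (vertsOf Q ω).toFinset.erase j =
        ((arrowsOf Q ω).map (fun ar => ar.1)).toFinset := by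
      rw [hveq, List.toFinset_cons, Finset.erase_insert (by
        rw [List.mem_toFinset]; exact hjns)]
    have hmapim : ((arrowsOf Q ω).map (fun ar => ar.1)).toFinset =
        (arrowsOf Q ω).toFinset.image (fun ar => ar.1) := by
      ext v; simp
    rw [himg, hmapim, Finset.sum_image (by
      intro x hx y hy hxy
      exact List.inj_on_of_nodup_map hsrcnd (List.mem_toFinset.mp hx)
        (List.mem_toFinset.mp hy) hxy)]
    exact (Finset.sum_subtype (arrowsOf Q ω).toFinset (fun ar => List.mem_toFinset)
      (fun ar => Module.finrank k (V ar.1))).symm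
  · -- extend at target
    intro c β
    refine biSup_mono fun ar har => ?_
    simp only [arrowsOf, List.mem_cons]
    exact Or.inr har
  · -- extend at source
    intro c α
    refine biSup_mono fun ar har => ?_
    rw [arrowsOf_comp]
    exact List.mem_append_left _ har


end
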